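/- Define b(x) as in the gamma-alternating motion backward density, i.e. b(x) = (1/(c+v)){ (λ^α e^{-λx*} (x*)^{α−1}/Γ(α))·(Γ(β, μx̄)/Γ(β)) + e^{-λx*} Σ_{k=1}^∞ (λ^{(k+1)α}(x*)^{(k+1)α−1}/Γ((k+1)α))[P(kβ, μx̄) − P(kβ+β, μx̄)] } with x̄ = (ct−x)/(c+v), x* = (vt+x)/(c+v). Then as x ↓ −vt: b(x) → +∞ if 0 < α < 1; b(x) → λ Γ(β, μt)/((c+v) Γ(α) Γ(β)) if α = 1; b(x) → 0 if α > 1. -/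

import Mathlib

open Real Filter Topology

/-- Regularized lower incomplete gamma function `P(a,u)`. -/
noncomputable def regGamma (a u : ℝ) : ℝ :=
  (1 / Real.Gamma a) * ∫ s in (0 : ℝ)..u, s ^ (a - 1) * Real.exp (-s)

/-- Upper incomplete gamma function `Γ(a,u)`. -/
noncomputable def upperGamma (a u : ℝ) : ℝ :=
  ∫ s in Set.Ioi u, s ^ (a - 1) * Real.exp (-s)

open MeasureTheory Set

lemma integrableOn_gi {a : ℝ} (ha : 0 < a) :
    IntegrableOn (fun s : ℝ => s ^ (a - 1) * Real.exp (-s)) (Set.Ioi 0) :=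
  (Real.GammaIntegral_convergent ha).congr_fun (fun s _ => mul_comm _ _) measurableSet_Ioi

lemma Gamma_eq_int {a : ℝ} (ha : 0 < a) :
    Real.Gamma a = ∫ s in Set.Ioi (0:ℝ), s ^ (a - 1) * Real.exp (-s) := by
  rw [Real.Gamma_eq_integral ha]
  exact setIntegral_congr_fun measurableSet_Ioi (fun s _ => mul_comm _ _)

lemma Gamma_lb {a : ℝ} (ha : 0 < a) : Real.exp (-3) / 3 ≤ Real.Gamma a := by
  rw [Gamma_eq_int ha]
  have h1 : Real.exp (-3) / 3 ≤ ∫ s in Set.Ioc (2:ℝ) 3, s ^ (a - 1) * Real.exp (-s) := by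
    have hconst : (Real.exp (-3) / 3) = ∫ _ in Set.Ioc (2:ℝ) 3, (Real.exp (-3) / 3) := by
      rw [setIntegral_const]; norm_num [Real.volume_Ioc]
    rw [hconst]
    refine setIntegral_mono_on (integrableOn_const measure_Ioc_lt_top.ne)
      ((integrableOn_gi ha).mono_set (fun s hs => by
        exact lt_trans (by norm_num) hs.1)) measurableSet_Ioc ?_
    intro s hs
    have h2 : (2:ℝ) < s := hs.1
    have h3 : s ≤ 3 := hs.2
    have hs0 : (0:ℝ) < s := by linarith
    have hexp : Real.exp (-3) ≤ Real.exp (-s) := Real.exp_le_exp.2 (by linarith)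
    have hpow : (1:ℝ)/3 ≤ s ^ (a - 1) := by
      rcases le_or_gt 1 a with h | h
      · have : (1:ℝ) ≤ s ^ (a - 1) := Real.one_le_rpow (by linarith) (by linarith)
        linarith
      · have h4 : s ^ (a - 1) = (s ^ (1 - a))⁻¹ := by
          rw [← Real.rpow_neg hs0.le]; ring_nf
        rw [h4]
        have h5 : s ^ (1 - a) ≤ 3 ^ (1 - a) := Real.rpow_le_rpow hs0.le h3 (by linarith)
        have h6 : (3:ℝ) ^ (1 - a) ≤ 3 ^ (1:ℝ) := by
          apply Real.rpow_le_rpow_left_iff (x := 3) (by norm_num) |>.2 (by linarith)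
        rw [Real.rpow_one] at h6
        have h7 : s ^ (1 - a) ≤ 3 := le_trans h5 h6
        have h8 : (0:ℝ) < s ^ (1 - a) := Real.rpow_pos_of_pos hs0 _
        rw [one_div]
        exact inv_anti₀ h8 h7
    calc Real.exp (-3) / 3 = (1/3) * Real.exp (-3) := by ring
    _ ≤ s ^ (a-1) * Real.exp (-s) := by
        apply mul_le_mul hpow hexp (Real.exp_pos _).le
        linarith [Real.rpow_nonneg hs0.le (a-1)]
  refine h1.trans ?_
  apply setIntegral_mono_set (integrableOn_gi ha) ?_ ?_
  · filter_upwards [self_mem_ae_restrict measurableSet_Ioi] with s hs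
    exact mul_nonneg (Real.rpow_nonneg (le_of_lt hs) _) (Real.exp_pos _).le
  · filter_upwards with s hs
    exact lt_trans (by norm_num) hs.1

lemma one_div_Gamma_le {a : ℝ} (ha : 0 < a) : 1 / Real.Gamma a ≤ 3 * Real.exp 3 := by
  rw [div_le_iff₀ (Real.Gamma_pos_of_pos ha)]
  have h := Gamma_lb ha
  have h2 : Real.exp (-3) = (Real.exp 3)⁻¹ := by rw [Real.exp_neg]
  rw [h2] at h
  have h3 : (0:ℝ) < Real.exp 3 := Real.exp_pos _
  have h4 : (3*Real.exp 3) * ((Real.exp 3)⁻¹/3) = 1 := by field_simp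
  nlinarith [mul_le_mul_of_nonneg_left h (by positivity : (0:ℝ) ≤ 3*Real.exp 3)]

lemma regGamma_nonneg {a u : ℝ} (ha : 0 < a) (hu : 0 ≤ u) : 0 ≤ regGamma a u := by
  unfold regGamma
  apply mul_nonneg (by positivity)
  rw [intervalIntegral.integral_of_le hu]
  apply setIntegral_nonneg measurableSet_Ioc
  intro s hs
  exact mul_nonneg (Real.rpow_nonneg hs.1.le _) (Real.exp_pos _).le

lemma regGamma_le_one {a u : ℝ} (ha : 0 < a) (hu : 0 ≤ u) : regGamma a u ≤ 1 := by
  unfold regGamma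
  rw [mul_comm, ← div_eq_mul_one_div, div_le_one (Real.Gamma_pos_of_pos ha)]
  rw [intervalIntegral.integral_of_le hu, Gamma_eq_int ha]
  apply setIntegral_mono_set (integrableOn_gi ha)
  · filter_upwards [self_mem_ae_restrict measurableSet_Ioi] with s hs
    exact mul_nonneg (Real.rpow_nonneg (le_of_lt hs) _) (Real.exp_pos _).le
  · filter_upwards with s hs
    exact hs.1

lemma upperGamma_nonneg {a u : ℝ} (hu : 0 ≤ u) : 0 ≤ upperGamma a u := by
  apply setIntegral_nonneg measurableSet_Ioi
  intro s hs
  exact mul_nonneg (Real.rpow_nonneg (hu.trans hs.le) _) (Real.exp_pos _).le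

lemma upperGamma_le_Gamma {a u : ℝ} (ha : 0 < a) (hu : 0 ≤ u) : upperGamma a u ≤ Real.Gamma a := by
  rw [Gamma_eq_int ha]
  apply setIntegral_mono_set (integrableOn_gi ha)
  · filter_upwards [self_mem_ae_restrict measurableSet_Ioi] with s hs
    exact mul_nonneg (Real.rpow_nonneg (le_of_lt hs) _) (Real.exp_pos _).le
  · filter_upwards with s hs
    exact lt_of_le_of_lt hu hs

lemma upperGamma_anti {a u w : ℝ} (ha : 0 < a) (hu : 0 ≤ u) (huw : u ≤ w) :
    upperGamma a w ≤ upperGamma a u := by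
  apply setIntegral_mono_set ((integrableOn_gi ha).mono_set (fun s hs => lt_of_le_of_lt hu hs))
  · filter_upwards [self_mem_ae_restrict measurableSet_Ioi] with s hs
    exact mul_nonneg (Real.rpow_nonneg ((hu.trans (le_of_lt hs))) _) (Real.exp_pos _).le
  · filter_upwards with s hs
    exact lt_of_le_of_lt huw hs

lemma upperGamma_pos {a u : ℝ} (ha : 0 < a) (hu : 0 ≤ u) : 0 < upperGamma a u := by
  unfold upperGamma
  rw [setIntegral_pos_iff_support_of_nonneg_ae]
  · have hsupp : (Function.support fun s : ℝ => s ^ (a-1) * Real.exp (-s)) ∩ Ioi u = Ioi u := by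
      rw [inter_eq_right]
      intro s hs
      have hs0 : 0 < s := lt_of_le_of_lt hu hs
      exact mul_ne_zero (Real.rpow_pos_of_pos hs0 _).ne' (Real.exp_pos _).ne'
    rw [hsupp, Real.volume_Ioi]
    simp
  · filter_upwards [self_mem_ae_restrict measurableSet_Ioi] with s hs
    exact mul_nonneg (Real.rpow_nonneg ((hu.trans hs.le)) _) (Real.exp_pos _).le
  · exact (integrableOn_gi ha).mono_set (fun s hs => lt_of_le_of_lt hu hs)

lemma UG_split {a w0 w : ℝ} (ha : 0 < a) (hw : 0 < w) (h2 : w ≤ w0) :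
    upperGamma a w = (∫ s in Set.Ioc w w0, s ^ (a-1) * Real.exp (-s)) + upperGamma a w0 := by
  unfold upperGamma
  rw [← setIntegral_union (Set.Ioc_disjoint_Ioi le_rfl) measurableSet_Ioi
    ((integrableOn_gi ha).mono_set (fun s hs => lt_of_lt_of_le hw (le_of_lt hs.1)))
    ((integrableOn_gi ha).mono_set (fun s hs => lt_trans (lt_of_lt_of_le hw h2) hs))]
  rw [Set.Ioc_union_Ioi_eq_Ioi h2]

lemma UG_diff_le {a w0 w : ℝ} (ha : 0 < a) (hw0 : 0 < w0) (h1 : w0/2 ≤ w) (h2 : w ≤ w0) :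
    upperGamma a w - upperGamma a w0 ≤ (max ((w0/2)^(a-1)) (w0^(a-1))) * (w0 - w) := by
  have hw : 0 < w := lt_of_lt_of_le (by linarith) h1
  rw [UG_split ha hw h2, add_sub_cancel_right]
  set M := max ((w0/2)^(a-1)) (w0^(a-1)) with hM
  have hMn : 0 ≤ M := le_trans (Real.rpow_nonneg (by linarith) _) (le_max_left _ _)
  have key : (∫ s in Set.Ioc w w0, s ^ (a-1) * Real.exp (-s)) ≤ M * (w0 - w) := by
    have hconst : ∫ _ in Set.Ioc w w0, M = M * (w0 - w) := by
      rw [setIntegral_const, Real.volume_real_Ioc_of_le h2, smul_eq_mul]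
      ring
    rw [← hconst]
    refine setIntegral_mono_on
      ((integrableOn_gi ha).mono_set (fun s hs => lt_of_lt_of_le hw (le_of_lt hs.1)))
      (integrableOn_const measure_Ioc_lt_top.ne) measurableSet_Ioc ?_
    intro s hs
    have hs1 : w < s := hs.1
    have hs2 : s ≤ w0 := hs.2
    have hs0 : 0 < s := lt_trans hw hs1
    have hexp : Real.exp (-s) ≤ 1 := Real.exp_le_one_iff.2 (by linarith)
    have hpow : s ^ (a-1) ≤ M := by
      rcases le_or_gt 1 a with h | h
      · exact le_trans (Real.rpow_le_rpow hs0.le hs2 (by linarith)) (le_max_right _ _)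
      · refine le_trans (Real.rpow_le_rpow_of_nonpos (by linarith) (by linarith) (by linarith))
          (le_max_left _ _)
    calc s ^ (a-1) * Real.exp (-s) ≤ M * 1 :=
          mul_le_mul hpow hexp (Real.exp_pos _).le hMn
    _ = M := mul_one M
  exact key

lemma tendsto_UG {a μ t : ℝ} (ha : 0 < a) (hμ : 0 < μ) (ht : 0 < t) :
    Filter.Tendsto (fun y => upperGamma a (μ*(t-y))) (nhdsWithin 0 (Set.Ioi 0))
      (nhds (upperGamma a (μ*t))) := by
  set w0 := μ*t with hw0def
  have hw0 : 0 < w0 := mul_pos hμ ht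
  set M := max ((w0/2)^(a-1)) (w0^(a-1)) with hMdef
  have hMn : 0 ≤ M := le_trans (Real.rpow_nonneg (by positivity) _) (le_max_left _ _)
  have hmem : Set.Ioo (0:ℝ) (t/2) ∈ nhdsWithin (0:ℝ) (Set.Ioi 0) :=
    Ioo_mem_nhdsGT_of_mem ⟨le_rfl, by positivity⟩
  apply tendsto_of_tendsto_of_tendsto_of_le_of_le' (g := fun _ => upperGamma a w0)
    (h := fun y => upperGamma a w0 + M*(μ*y))
  · exact tendsto_const_nhds
  · have h1 : Filter.Tendsto (fun y : ℝ => upperGamma a w0 + M*(μ*y)) (nhds 0)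
        (nhds (upperGamma a w0 + M*(μ*0))) := by
      exact (continuous_const.add (continuous_const.mul (continuous_const.mul
        continuous_id))).tendsto 0
    simpa using h1.mono_left nhdsWithin_le_nhds
  · filter_upwards [hmem] with y hy
    have hwpos : (0:ℝ) ≤ μ*(t-y) := by nlinarith [hy.1, hy.2]
    refine upperGamma_anti ha hwpos ?_
    nlinarith [hy.1]
  · filter_upwards [hmem] with y hy
    have h1 : w0/2 ≤ μ*(t-y) := by rw [hw0def]; nlinarith [hy.2]
    have h2 : μ*(t-y) ≤ w0 := by rw [hw0def]; nlinarith [hy.1]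
    have h3 := UG_diff_le ha hw0 h1 h2
    have h4 : w0 - μ*(t-y) = μ*y := by rw [hw0def]; ring
    rw [h4] at h3
    rw [← hMdef] at h3
    linarith

lemma S_bound {l α β μ t y : ℝ} (hl : 0 < l) (hα : 0 < α) (hβ : 0 < β) (hμ : 0 < μ)
    (hy0 : 0 < y) (hyt : y < t) (hy1 : (l*y)^α ≤ 1/2) :
    Summable (fun k : ℕ => l ^ ((((k:ℝ)+1)+1)*α) * y ^ ((((k:ℝ)+1)+1)*α - 1) /
      Real.Gamma ((((k:ℝ)+1)+1)*α) *
      (regGamma (((k:ℝ)+1)*β) (μ*(t-y)) - regGamma (((k:ℝ)+1)*β+β) (μ*(t-y)))) ∧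
    |∑' k : ℕ, l ^ ((((k:ℝ)+1)+1)*α) * y ^ ((((k:ℝ)+1)+1)*α - 1) /
      Real.Gamma ((((k:ℝ)+1)+1)*α) *
      (regGamma (((k:ℝ)+1)*β) (μ*(t-y)) - regGamma (((k:ℝ)+1)*β+β) (μ*(t-y)))| ≤
      (6 * Real.exp 3 * l^(2*α)) * y^(2*α-1) := by
  set f := fun k : ℕ => l ^ ((((k:ℝ)+1)+1)*α) * y ^ ((((k:ℝ)+1)+1)*α - 1) /
      Real.Gamma ((((k:ℝ)+1)+1)*α) *
      (regGamma (((k:ℝ)+1)*β) (μ*(t-y)) - regGamma (((k:ℝ)+1)*β+β) (μ*(t-y))) with hfdef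
  set C := 3 * Real.exp 3 * l^(2*α) * y^(2*α-1) with hCdef
  have hCn : 0 ≤ C := by positivity
  set g := fun k : ℕ => C * (1/2:ℝ)^k with hgdef
  have hw : (0:ℝ) ≤ μ*(t-y) := by nlinarith
  have hfg : ∀ k : ℕ, |f k| ≤ g k := by
    intro k
    set a := (((k:ℝ)+1)+1)*α with hadef
    have hak : ((k:ℝ)+1)+1 = ((k+2 : ℕ) : ℝ) := by push_cast; ring
    have ha : 0 < a := by positivity
    have hb1 : 0 < ((k:ℝ)+1)*β := by positivity
    have hb2 : 0 < ((k:ℝ)+1)*β + β := by positivity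
    have hd : |regGamma (((k:ℝ)+1)*β) (μ*(t-y)) - regGamma (((k:ℝ)+1)*β+β) (μ*(t-y))| ≤ 1 := by
      have p1 := regGamma_nonneg hb1 hw
      have p2 := regGamma_nonneg hb2 hw
      have q1 := regGamma_le_one hb1 hw
      have q2 := regGamma_le_one hb2 hw
      rw [abs_le]; constructor <;> linarith
    have hmain : l ^ a * y ^ (a - 1) / Real.Gamma a ≤ C * (1/2:ℝ)^k := by
      have hly : l ^ a * y ^ (a-1) = (l*y)^a / y := by
        rw [Real.mul_rpow hl.le hy0.le, Real.rpow_sub hy0, Real.rpow_one]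
        ring
      have hsplit : (l*y)^a = ((l*y)^α)^k * ((l*y)^α)^2 := by
        rw [← pow_add, ← Real.rpow_natCast ((l*y)^α) (k+2),
          ← Real.rpow_mul (by positivity : (0:ℝ) ≤ l*y)]
        congr 1
        push_cast
        ring
      have hr0 : (0:ℝ) ≤ (l*y)^α := Real.rpow_nonneg (by positivity) _
      have h1 : ((l*y)^α)^k ≤ (1/2:ℝ)^k := pow_le_pow_left₀ hr0 hy1 k
      have h2 : ((l*y)^α)^2 = l^(2*α) * y^(2*α) := by
        rw [← Real.rpow_natCast ((l*y)^α) 2, ← Real.rpow_mul (by positivity : (0:ℝ) ≤ l*y),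
          Real.mul_rpow hl.le hy0.le]
        norm_num
        rw [mul_comm α 2]
      have h3 : (l*y)^a ≤ (1/2:ℝ)^k * (l^(2*α) * y^(2*α)) := by
        rw [hsplit, h2]
        exact mul_le_mul_of_nonneg_right h1 (by positivity)
      have h4 : (l*y)^a / y ≤ (1/2:ℝ)^k * l^(2*α) * y^(2*α-1) := by
        rw [div_le_iff₀ hy0]
        calc (l*y)^a ≤ (1/2:ℝ)^k * (l^(2*α) * y^(2*α)) := h3
        _ = (1/2:ℝ)^k * l^(2*α) * y^(2*α-1) * y := by
            rw [Real.rpow_sub hy0, Real.rpow_one]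
            field_simp
      have h5 : 1 / Real.Gamma a ≤ 3 * Real.exp 3 := one_div_Gamma_le ha
      have h6 : (0:ℝ) ≤ (l*y)^a / y := by positivity
      calc l ^ a * y ^ (a-1) / Real.Gamma a = ((l*y)^a / y) * (1/Real.Gamma a) := by
            rw [hly]; ring
      _ ≤ ((1/2:ℝ)^k * l^(2*α) * y^(2*α-1)) * (3 * Real.exp 3) := by
            apply mul_le_mul h4 h5 (by positivity) (by positivity)
      _ = C * (1/2:ℝ)^k := by rw [hCdef]; ring
    have habs : |f k| = l ^ a * y ^ (a-1) / Real.Gamma a *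
        |regGamma (((k:ℝ)+1)*β) (μ*(t-y)) - regGamma (((k:ℝ)+1)*β+β) (μ*(t-y))| := by
      rw [hfdef, abs_mul, abs_of_nonneg (by positivity : (0:ℝ) ≤ l ^ a * y ^ (a-1) / Real.Gamma a)]
    rw [habs, hgdef]
    refine le_trans ?_ hmain
    have hnn : (0:ℝ) ≤ l ^ a * y ^ (a-1) / Real.Gamma a := by positivity
    simpa using mul_le_mul_of_nonneg_left hd hnn
  have hg : Summable g := (summable_geometric_of_lt_one (by norm_num) (by norm_num)).mul_left C
  have habs : Summable (fun k => |f k|) := Summable.of_nonneg_of_le (fun k => abs_nonneg _) hfg hg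
  have hf : Summable f := habs.of_abs
  refine ⟨hf, ?_⟩
  have h1 : |∑' k, f k| ≤ ∑' k, |f k| := by
    have := norm_tsum_le_tsum_norm (f := f) (by simpa only [Real.norm_eq_abs] using habs)
    simpa only [Real.norm_eq_abs] using this
  have h2 : ∑' k, |f k| ≤ ∑' k, g k := Summable.tsum_le_tsum hfg habs hg
  have h3 : ∑' k, g k = C * 2 := by
    rw [hgdef, tsum_mul_left, tsum_geometric_of_lt_one (by norm_num) (by norm_num)]
    norm_num
  calc |∑' k, f k| ≤ ∑' k, g k := le_trans h1 h2
  _ = C * 2 := h3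
  _ = (6 * Real.exp 3 * l^(2*α)) * y^(2*α-1) := by rw [hCdef]; ring


/-- behaviour of the backward density `b(x,t|c)` as `x ↓ -vt`. -/
theorem backward_density_limit_at_neg_vt (c v l μ α β t : ℝ)
    (hc : 0 < c) (hv : 0 < v) (hl : 0 < l) (hμ : 0 < μ)
    (hα : 0 < α) (hβ : 0 < β) (ht : 0 < t)
    (b : ℝ → ℝ)
    (hb : ∀ x, b x = (1 / (c + v)) *
      (l ^ α * Real.exp (-l * ((v * t + x) / (c + v))) *
          ((v * t + x) / (c + v)) ^ (α - 1) / Real.Gamma α *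
          (upperGamma β (μ * ((c * t - x) / (c + v))) / Real.Gamma β) +
        Real.exp (-l * ((v * t + x) / (c + v))) *
          ∑' k : ℕ,
            l ^ ((((k : ℝ) + 1) + 1) * α) *
                ((v * t + x) / (c + v)) ^ ((((k : ℝ) + 1) + 1) * α - 1) /
                Real.Gamma ((((k : ℝ) + 1) + 1) * α) *
              (regGamma (((k : ℝ) + 1) * β) (μ * ((c * t - x) / (c + v))) -
                regGamma (((k : ℝ) + 1) * β + β) (μ * ((c * t - x) / (c + v)))))) :
    (α < 1 → Tendsto b (nhdsWithin (-v * t) (Set.Ioo (-v * t) (c * t))) atTop) ∧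
    (α = 1 → Tendsto b (nhdsWithin (-v * t) (Set.Ioo (-v * t) (c * t)))
      (nhds (l * upperGamma β (μ * t) / ((c + v) * Real.Gamma α * Real.Gamma β)))) ∧
    (1 < α → Tendsto b (nhdsWithin (-v * t) (Set.Ioo (-v * t) (c * t))) (nhds 0)) := by
  have hcv : (0:ℝ) < c + v := by linarith
  set L := nhdsWithin (-v * t) (Set.Ioo (-v * t) (c * t)) with hLdef
  set B : ℝ → ℝ := fun y => (1 / (c + v)) *
      (l ^ α * Real.exp (-l * y) * y ^ (α - 1) / Real.Gamma α *
          (upperGamma β (μ * (t - y)) / Real.Gamma β) +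
        Real.exp (-l * y) *
          ∑' k : ℕ, l ^ ((((k : ℝ) + 1) + 1) * α) * y ^ ((((k : ℝ) + 1) + 1) * α - 1) /
                Real.Gamma ((((k : ℝ) + 1) + 1) * α) *
              (regGamma (((k : ℝ) + 1) * β) (μ * (t - y)) -
                regGamma (((k : ℝ) + 1) * β + β) (μ * (t - y)))) with hBdef
  have hkey : ∀ x : ℝ, (c * t - x) / (c + v) = t - (v * t + x) / (c + v) := by
    intro x; field_simp; ring
  have hcomp : ∀ x : ℝ, b x = B ((v * t + x) / (c + v)) := by
    intro x
    rw [hb x, hBdef]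
    simp only
    rw [hkey x]
  -- the map x ↦ x* tends to 0 from the right
  have hu : Tendsto (fun x : ℝ => (v * t + x) / (c + v)) L (nhdsWithin 0 (Set.Ioi 0)) := by
    rw [tendsto_nhdsWithin_iff]
    constructor
    · have h1 : Tendsto (fun x : ℝ => (v * t + x) / (c + v)) (nhds (-v * t))
          (nhds ((v * t + -v * t) / (c + v))) :=
        ((continuous_const.add continuous_id).div_const _).tendsto _
      have h2 : (v * t + -v * t) / (c + v) = 0 := by ring_nf
      rw [h2] at h1
      exact h1.mono_left nhdsWithin_le_nhds
    · filter_upwards [self_mem_nhdsWithin] with x hx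
      exact div_pos (by linarith [hx.1]) hcv
  -- eventual facts on the y-side
  have hmem : Set.Ioo (0:ℝ) (t/2) ∈ nhdsWithin (0:ℝ) (Set.Ioi 0) :=
    Ioo_mem_nhdsGT_of_mem ⟨le_rfl, by positivity⟩
  have hsmall : ∀ᶠ y in nhdsWithin (0:ℝ) (Set.Ioi 0), (l*y)^α ≤ 1/2 := by
    have h1 : Tendsto (fun y : ℝ => (l*y)^α) (nhds 0) (nhds 0) := by
      have h2 : ContinuousAt (fun z : ℝ => z ^ α) 0 :=
        Real.continuousAt_rpow_const 0 α (Or.inr hα.le)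
      have h3 : Tendsto (fun y : ℝ => l * y) (nhds 0) (nhds 0) := by
        simpa using (continuous_mul_left l).tendsto (0:ℝ)
      have := h2.tendsto.comp h3
      simpa [Function.comp_def, Real.zero_rpow hα.ne'] using this
    exact (h1.mono_left nhdsWithin_le_nhds).eventually_le_const (by norm_num)
  set K := 6 * Real.exp 3 * l^(2*α) with hKdef
  have hKpos : 0 < K := by positivity
  have hSb : ∀ᶠ y in nhdsWithin (0:ℝ) (Set.Ioi 0),
      |∑' k : ℕ, l ^ ((((k : ℝ) + 1) + 1) * α) * y ^ ((((k : ℝ) + 1) + 1) * α - 1) /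
                Real.Gamma ((((k : ℝ) + 1) + 1) * α) *
              (regGamma (((k : ℝ) + 1) * β) (μ * (t - y)) -
                regGamma (((k : ℝ) + 1) * β + β) (μ * (t - y)))| ≤ K * y^(2*α-1) := by
    filter_upwards [hmem, hsmall] with y hy hy2
    have := (S_bound hl hα hβ hμ hy.1 (by linarith [hy.2] : y < t) hy2).2
    simpa [hKdef, mul_assoc] using this
  have hexp1 : Tendsto (fun y : ℝ => Real.exp (-l * y)) (nhdsWithin 0 (Set.Ioi 0)) (nhds 1) := by
    have h1 : Tendsto (fun y : ℝ => Real.exp (-l * y)) (nhds 0) (nhds (Real.exp (-l * 0))) :=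
      (Real.continuous_exp.comp (continuous_const.mul continuous_id)).tendsto 0
    simpa using h1.mono_left nhdsWithin_le_nhds
  have hUG : Tendsto (fun y => upperGamma β (μ * (t - y))) (nhdsWithin 0 (Set.Ioi 0))
      (nhds (upperGamma β (μ * t))) := tendsto_UG hβ hμ ht
  -- tail term tends to 0 whenever 2α - 1 > 0
  have htail : 0 < 2*α - 1 → Tendsto (fun y : ℝ => Real.exp (-l * y) *
      ∑' k : ℕ, l ^ ((((k : ℝ) + 1) + 1) * α) * y ^ ((((k : ℝ) + 1) + 1) * α - 1) /
                Real.Gamma ((((k : ℝ) + 1) + 1) * α) *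
              (regGamma (((k : ℝ) + 1) * β) (μ * (t - y)) -
                regGamma (((k : ℝ) + 1) * β + β) (μ * (t - y))))
      (nhdsWithin 0 (Set.Ioi 0)) (nhds 0) := by
    intro h2α
    have hKy : Tendsto (fun y : ℝ => K * y^(2*α-1)) (nhdsWithin 0 (Set.Ioi 0)) (nhds 0) := by
      have h2 : ContinuousAt (fun z : ℝ => z ^ (2*α-1)) 0 :=
        Real.continuousAt_rpow_const 0 _ (Or.inr h2α.le)
      have h3 := (h2.tendsto.const_mul K).mono_left (nhdsWithin_le_nhds :
        nhdsWithin (0:ℝ) (Set.Ioi 0) ≤ nhds 0)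
      simpa [Real.zero_rpow (ne_of_gt h2α)] using h3
    have hKy' : Tendsto (fun y : ℝ => -(K * y^(2*α-1))) (nhdsWithin 0 (Set.Ioi 0)) (nhds 0) := by
      simpa using hKy.neg
    apply tendsto_of_tendsto_of_tendsto_of_le_of_le' hKy' hKy
    all_goals {
      filter_upwards [hSb, self_mem_nhdsWithin] with y hy hy0
      have hexps : Real.exp (-l * y) ≤ 1 :=
        Real.exp_le_one_iff.2 (by nlinarith [Set.mem_Ioi.1 hy0])
      have habs : |Real.exp (-l * y) *
          ∑' k : ℕ, l ^ ((((k : ℝ) + 1) + 1) * α) * y ^ ((((k : ℝ) + 1) + 1) * α - 1) /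
                Real.Gamma ((((k : ℝ) + 1) + 1) * α) *
              (regGamma (((k : ℝ) + 1) * β) (μ * (t - y)) -
                regGamma (((k : ℝ) + 1) * β + β) (μ * (t - y)))| ≤ K * y^(2*α-1) := by
        rw [abs_mul, abs_of_nonneg (Real.exp_pos _).le]
        refine le_trans (mul_le_mul_of_nonneg_right hexps (abs_nonneg _)) ?_
        rw [one_mul]
        exact hy
      obtain ⟨ha1, ha2⟩ := abs_le.1 habs
      linarith }
  refine ⟨?_, ?_, ?_⟩
  · -- α < 1 : blow-up
    intro hα1
    set C1 := l^α * Real.exp (-l*(t/2)) / Real.Gamma α * (upperGamma β (μ*t)/Real.Gamma β)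
      with hC1def
    have hC1 : 0 < C1 :=
      mul_pos (div_pos (mul_pos (Real.rpow_pos_of_pos hl α) (Real.exp_pos _))
          (Real.Gamma_pos_of_pos hα))
        (div_pos (upperGamma_pos hβ (by positivity)) (Real.Gamma_pos_of_pos hβ))
    have hlow : (fun y : ℝ => (1/(c+v)) * (y^(α-1) * (C1 - K*y^α))) ≤ᶠ[nhdsWithin (0:ℝ) (Set.Ioi 0)] B := by
      filter_upwards [hmem, hSb] with y hy hy2
      have hy0 : 0 < y := hy.1
      have hexps : Real.exp (-l * y) ≤ 1 := Real.exp_le_one_iff.2 (by nlinarith)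
      have hF : C1 * y^(α-1) ≤ l ^ α * Real.exp (-l * y) * y ^ (α - 1) / Real.Gamma α *
          (upperGamma β (μ * (t - y)) / Real.Gamma β) := by
        have hre : C1 * y^(α-1) = l ^ α * Real.exp (-l*(t/2)) * y ^ (α - 1) / Real.Gamma α *
            (upperGamma β (μ*t) / Real.Gamma β) := by rw [hC1def]; ring
        rw [hre]
        have hyp : (0:ℝ) ≤ y ^ (α-1) := Real.rpow_nonneg hy0.le _
        have he : Real.exp (-l*(t/2)) ≤ Real.exp (-l * y) :=
          Real.exp_le_exp.2 (by nlinarith [hy.2])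
        have hUGm : upperGamma β (μ*t) ≤ upperGamma β (μ * (t - y)) :=
          upperGamma_anti hβ (by nlinarith [hy.2]) (by nlinarith)
        have hUGn : 0 ≤ upperGamma β (μ*t) := (upperGamma_pos hβ (by positivity)).le
        gcongr
      have hG : -(K * y^(2*α-1)) ≤ Real.exp (-l * y) *
          ∑' k : ℕ, l ^ ((((k : ℝ) + 1) + 1) * α) * y ^ ((((k : ℝ) + 1) + 1) * α - 1) /
                Real.Gamma ((((k : ℝ) + 1) + 1) * α) *
              (regGamma (((k : ℝ) + 1) * β) (μ * (t - y)) -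
                regGamma (((k : ℝ) + 1) * β + β) (μ * (t - y))) := by
        have habs : |Real.exp (-l * y) *
            ∑' k : ℕ, l ^ ((((k : ℝ) + 1) + 1) * α) * y ^ ((((k : ℝ) + 1) + 1) * α - 1) /
                  Real.Gamma ((((k : ℝ) + 1) + 1) * α) *
                (regGamma (((k : ℝ) + 1) * β) (μ * (t - y)) -
                  regGamma (((k : ℝ) + 1) * β + β) (μ * (t - y)))| ≤ K * y^(2*α-1) := by
          rw [abs_mul, abs_of_nonneg (Real.exp_pos _).le]
          refine le_trans (mul_le_mul_of_nonneg_right hexps (abs_nonneg _)) ?_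
          rw [one_mul]
          exact hy2
        linarith [(abs_le.1 habs).1]
      have hid : y^(2*α-1) = y^(α-1) * y^α := by
        rw [← Real.rpow_add hy0]
        congr 1
        ring
      rw [hBdef]
      simp only
      rw [hid] at hG
      have hsum : y^(α-1) * (C1 - K*y^α) ≤
          l ^ α * Real.exp (-l * y) * y ^ (α - 1) / Real.Gamma α *
            (upperGamma β (μ * (t - y)) / Real.Gamma β) +
          Real.exp (-l * y) *
            ∑' k : ℕ, l ^ ((((k : ℝ) + 1) + 1) * α) * y ^ ((((k : ℝ) + 1) + 1) * α - 1) /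
                  Real.Gamma ((((k : ℝ) + 1) + 1) * α) *
                (regGamma (((k : ℝ) + 1) * β) (μ * (t - y)) -
                  regGamma (((k : ℝ) + 1) * β + β) (μ * (t - y))) := by nlinarith [hF, hG]
      exact mul_le_mul_of_nonneg_left hsum (by positivity)
    have hpowtop : Tendsto (fun y : ℝ => y^(α-1)) (nhdsWithin 0 (Set.Ioi 0)) atTop := by
      have h1 := (tendsto_rpow_atTop (by linarith : (0:ℝ) < 1-α)).comp tendsto_inv_nhdsGT_zero
      refine h1.congr' ?_
      filter_upwards [self_mem_nhdsWithin] with y hy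
      have hy0 : (0:ℝ) < y := hy
      show (y⁻¹) ^ (1-α) = y ^ (α-1)
      rw [Real.inv_rpow hy0.le, ← Real.rpow_neg hy0.le]
      congr 1
      ring
    have hfac : Tendsto (fun y : ℝ => C1 - K*y^α) (nhdsWithin 0 (Set.Ioi 0)) (nhds C1) := by
      have h2 : ContinuousAt (fun z : ℝ => z ^ α) 0 :=
        Real.continuousAt_rpow_const 0 α (Or.inr hα.le)
      have h3 := ((tendsto_const_nhds (x := C1)).sub (h2.tendsto.const_mul K)).mono_left
        (nhdsWithin_le_nhds : nhdsWithin (0:ℝ) (Set.Ioi 0) ≤ nhds 0)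
      simpa [Real.zero_rpow hα.ne'] using h3
    have hmul := Filter.Tendsto.atTop_mul_pos hC1 hpowtop hfac
    have hlowtop := Filter.Tendsto.const_mul_atTop (by positivity : (0:ℝ) < 1/(c+v)) hmul
    have hBtop : Tendsto B (nhdsWithin 0 (Set.Ioi 0)) atTop := tendsto_atTop_mono' _ hlow hlowtop
    exact (hBtop.comp hu).congr (fun x => (hcomp x).symm)
  · -- α = 1
    intro hα1
    subst hα1
    have h1 : Tendsto (fun y : ℝ => y ^ ((1:ℝ)-1)) (nhdsWithin 0 (Set.Ioi 0)) (nhds 1) := by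
      have : (fun y : ℝ => y ^ ((1:ℝ)-1)) = fun _ => (1:ℝ) := by
        funext y; norm_num
      rw [this]
      exact tendsto_const_nhds
    have hFy := ((((tendsto_const_nhds (x := (l:ℝ)^(1:ℝ))).mul hexp1).mul h1).div_const
      (Real.Gamma 1)).mul (hUG.div_const (Real.Gamma β))
    have hB := ((hFy.add (htail (by norm_num))).const_mul (1/(c+v)))
    have hval : (1/(c+v)) * ((l:ℝ)^(1:ℝ) * 1 * 1 / Real.Gamma 1 *
        (upperGamma β (μ*t) / Real.Gamma β) + 0) =
        l * upperGamma β (μ * t) / ((c + v) * Real.Gamma 1 * Real.Gamma β) := by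
      rw [Real.rpow_one, Real.Gamma_one]
      field_simp
      ring
    rw [← hval]
    exact (hB.comp hu).congr (fun x => (hcomp x).symm)
  · -- α > 1
    intro hα1
    have h1 : Tendsto (fun y : ℝ => y ^ (α-1)) (nhdsWithin 0 (Set.Ioi 0)) (nhds 0) := by
      have h2 : ContinuousAt (fun z : ℝ => z ^ (α-1)) 0 :=
        Real.continuousAt_rpow_const 0 _ (Or.inr (by linarith))
      have h3 := h2.tendsto.mono_left
        (nhdsWithin_le_nhds : nhdsWithin (0:ℝ) (Set.Ioi 0) ≤ nhds 0)
      simpa [Real.zero_rpow (by intro h; linarith [sub_eq_zero.1 h] : α - 1 ≠ 0)] using h3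
    have hFy := ((((tendsto_const_nhds (x := (l:ℝ)^α)).mul hexp1).mul h1).div_const
      (Real.Gamma α)).mul (hUG.div_const (Real.Gamma β))
    have hB := ((hFy.add (htail (by linarith))).const_mul (1/(c+v)))
    have hval : (1/(c+v)) * ((l:ℝ)^α * 1 * 0 / Real.Gamma α *
        (upperGamma β (μ*t) / Real.Gamma β) + 0) = 0 := by ring
    rw [hval] at hB
    exact (hB.comp hu).congr (fun x => (hcomp x).symm)
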